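/- arXiv:0901.4286 — 3 statements merged into one kernel-verified Lean document; each statement's English description precedes it below -/
import Mathlib

section
/- Let σ ∈ ℝ, λ ∈ ℂ, and let v : ℝ³ → ℂ³ be a Schwartz function, not identically zero, such that every component satisfies pointwise on ℝ³ the eigenvalue equation Δv(y) − (1/2)⟨y, ∇v(y)⟩ − (1/2)v(y) − σ·(y₁ ∂₂v(y) − y₂ ∂₁v(y)) = λ v(y). Then Re λ ≤ −1/2; in particular Re λ < 0 for every σ ∈ ℝ, so the operator B* − (1/2)I − σ D_μ has no eigenvalue on the imaginary axis and an Andronov–Hopf bifurcation from the zero solution of the blow-up rescaled Navier–Stokes equations is impossible. -/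
open Real

/-- Partial derivative `∂_j f` along the `j`-th coordinate direction. -/
noncomputable def pd {N : ℕ} {F : Type*} [NormedAddCommGroup F] [NormedSpace ℝ F]
    (f : (Fin N → ℝ) → F) (j : Fin N) (x : Fin N → ℝ) : F :=
  deriv (fun s => f (Function.update x j s)) (x j)

open Filter Topology

/-- Second derivative test at a global maximum. -/
lemma second_deriv_test_aux {h h' : ℝ → ℝ} {x m : ℝ}
    (hd : ∀ t, HasDerivAt h (h' t) t) (hd2 : HasDerivAt h' m x)
    (hmax : ∀ t, h t ≤ h x) (h0 : h' x = 0) : m ≤ 0 := by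
  by_contra hm
  push_neg at hm
  have hslope : Tendsto (slope h' x) (𝓝[≠] x) (𝓝 m) :=
    hasDerivAt_iff_tendsto_slope.mp hd2
  have hmono : 𝓝[>] x ≤ 𝓝[≠] x := nhdsWithin_mono x fun t ht => ne_of_gt ht
  have hev : ∀ᶠ t in 𝓝[>] x, 0 < slope h' x t :=
    (hslope.mono_left hmono).eventually_const_lt hm
  have hev' : ∀ᶠ t in 𝓝[>] x, 0 < h' t := by
    filter_upwards [hev, self_mem_nhdsWithin] with t ht ht'
    have hx : 0 < t - x := sub_pos.mpr ht'
    rw [slope_def_field] at ht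
    have h2 : 0 < h' t - h' x := by
      have := mul_pos ht hx
      rwa [div_mul_cancel₀ _ (ne_of_gt hx)] at this
    linarith [h0]
  obtain ⟨u, hu, hsub⟩ := mem_nhdsGT_iff_exists_Ioc_subset.mp hev'
  have hmono2 : StrictMonoOn h (Set.Icc x u) := by
    apply strictMonoOn_of_hasDerivWithinAt_pos (convex_Icc x u)
      (fun t _ => (hd t).continuousAt.continuousWithinAt)
    · intro t ht
      exact (hd t).hasDerivWithinAt
    · intro t ht
      rw [interior_Icc] at ht
      exact hsub ⟨ht.1, le_of_lt ht.2⟩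
  have := hmono2 (Set.left_mem_Icc.mpr (le_of_lt hu)) (Set.right_mem_Icc.mpr (le_of_lt hu)) hu
  linarith [hmax u]

/-- Real inner product of two complex numbers: `Re (conj z * w)`. -/
noncomputable def ip (z w : ℂ) : ℝ := z.re * w.re + z.im * w.im

lemma ip_sub (z w₁ w₂ : ℂ) : ip z (w₁ - w₂) = ip z w₁ - ip z w₂ := by
  simp only [ip, Complex.sub_re, Complex.sub_im]; ring

lemma ip_sum {α : Type*} (s : Finset α) (z : ℂ) (w : α → ℂ) :
    ip z (∑ j ∈ s, w j) = ∑ j ∈ s, ip z (w j) := by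
  simp only [ip, Complex.re_sum, Complex.im_sum, Finset.mul_sum, Finset.sum_add_distrib]

lemma ip_ofReal_mul (r : ℝ) (z w : ℂ) : ip z ((r : ℂ) * w) = r * ip z w := by
  simp only [ip, Complex.mul_re, Complex.mul_im, Complex.ofReal_re, Complex.ofReal_im]
  ring

lemma ip_half_mul (z w : ℂ) : ip z ((1 / 2 : ℂ) * w) = (1 / 2) * ip z w := by
  have h : ((1 : ℂ) / 2) = (((1 : ℝ) / 2 : ℝ) : ℂ) := by norm_num
  rw [h, ip_ofReal_mul]

lemma ip_lam (lam z : ℂ) : ip z (lam * z) = lam.re * ip z z := by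
  simp only [ip, Complex.mul_re, Complex.mul_im]; ring

lemma HasDerivAt.cre {f : ℝ → ℂ} {f' : ℂ} {t : ℝ} (hf : HasDerivAt f f' t) :
    HasDerivAt (fun s => (f s).re) f'.re t :=
  Complex.reCLM.hasFDerivAt.comp_hasDerivAt t hf

lemma HasDerivAt.cim {f : ℝ → ℂ} {f' : ℂ} {t : ℝ} (hf : HasDerivAt f f' t) :
    HasDerivAt (fun s => (f s).im) f'.im t :=
  Complex.imCLM.hasFDerivAt.comp_hasDerivAt t hf

/-- At a global maximum of `∑ i |v i|²`, for each direction `j` the first-order term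
vanishes and the second-order term is nonpositive. -/
lemma sliceMax (v : SchwartzMap (Fin 3 → ℝ) (Fin 3 → ℂ)) (x : Fin 3 → ℝ)
    (hmax : ∀ y : Fin 3 → ℝ, (∑ i, ((v y i).re * (v y i).re + (v y i).im * (v y i).im))
      ≤ ∑ i, ((v x i).re * (v x i).re + (v x i).im * (v x i).im)) (j : Fin 3) :
    (∑ i, ip (v x i) (pd (fun z => v z i) j x)) = 0 ∧
    (∑ i, ip (v x i) (pd (pd (fun z => v z i) j) j x)) ≤ 0 := by
  classical
  set F : Fin 3 → ℝ → ℂ := fun i s => v (Function.update x j s) i with hFdef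
  have hFc : ∀ i, ContDiff ℝ (⊤ : ℕ∞) (F i) := fun i =>
    contDiff_pi.mp ((v.smooth ⊤).comp (contDiff_update _ x j)) i
  have hF' : ∀ i t, HasDerivAt (F i) (deriv (F i) t) t := fun i t =>
    ((hFc i).differentiable (by simp)).differentiableAt.hasDerivAt
  have hF'c : ∀ i, ContDiff ℝ (⊤ : ℕ∞) (deriv (F i)) := fun i =>
    (contDiff_infty_iff_deriv.mp (hFc i)).2
  have hF'' : ∀ i t, HasDerivAt (deriv (F i)) (deriv (deriv (F i)) t) t := fun i t =>
    ((hF'c i).differentiable (by simp)).differentiableAt.hasDerivAt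
  set h : ℝ → ℝ := fun s => ∑ i, ((F i s).re * (F i s).re + (F i s).im * (F i s).im) with hhdef
  set d1 : ℝ → ℝ := fun s =>
    ∑ i, (2 * ((F i s).re * (deriv (F i) s).re + (F i s).im * (deriv (F i) s).im)) with hd1def
  have hd1 : ∀ t, HasDerivAt h (d1 t) t := by
    intro t
    apply HasDerivAt.fun_sum
    intro i _
    have ha := (hF' i t).cre
    have hb := (hF' i t).cim
    have := (ha.fun_mul ha).fun_add (hb.fun_mul hb)
    convert this using 1
    ring
  set tj := x j with htj
  set d2v : ℝ :=
    ∑ i, (2 * ((deriv (F i) tj).re * (deriv (F i) tj).re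
            + (deriv (F i) tj).im * (deriv (F i) tj).im)
        + 2 * ((F i tj).re * (deriv (deriv (F i)) tj).re
            + (F i tj).im * (deriv (deriv (F i)) tj).im)) with hd2vdef
  have hd2 : HasDerivAt d1 d2v tj := by
    apply HasDerivAt.fun_sum
    intro i _
    have ha := (hF' i tj).cre
    have hb := (hF' i tj).cim
    have ha' := (hF'' i tj).cre
    have hb' := (hF'' i tj).cim
    have := ((ha.fun_mul ha').fun_add (hb.fun_mul hb')).const_mul (2 : ℝ)
    convert this using 1
    · rfl
    ring
  have hFx : ∀ i, F i tj = v x i := by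
    intro i; simp only [hFdef, htj, Function.update_eq_self]
  have hhmax : ∀ t, h t ≤ h tj := by
    intro t
    have h2 : h tj = ∑ i, ((v x i).re * (v x i).re + (v x i).im * (v x i).im) := by
      apply Finset.sum_congr rfl; intro i _; rw [hFx i]
    rw [h2]
    exact hmax _
  have hder0 : d1 tj = 0 := by
    have hloc : IsLocalMax h tj := Filter.Eventually.of_forall fun t => hhmax t
    rw [← (hd1 tj).deriv]
    exact hloc.deriv_eq_zero
  have hd2le : d2v ≤ 0 := second_deriv_test_aux hd1 hd2 hhmax hder0
  have e1 : ∀ i, pd (fun z => v z i) j x = deriv (F i) tj := fun i => rfl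
  have e2 : ∀ i, pd (pd (fun z => v z i) j) j x = deriv (deriv (F i)) tj := by
    intro i
    have key : (fun s => pd (fun z => v z i) j (Function.update x j s)) = deriv (F i) := by
      funext s
      simp only [pd, Function.update_idem, Function.update_self]
      rfl
    show deriv (fun s => pd (fun z => v z i) j (Function.update x j s)) (x j)
        = deriv (deriv (F i)) tj
    rw [key, htj]
  constructor
  · have : ∑ i, ip (v x i) (pd (fun z => v z i) j x) = (1 / 2) * d1 tj := by
      rw [hd1def, Finset.mul_sum]
      apply Finset.sum_congr rfl
      intro i _
      rw [e1 i, ip, ← hFx i]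
      ring
    rw [this, hder0]; ring
  · have hsum : ∑ i, (2 * ip (v x i) (pd (pd (fun z => v z i) j) j x)) ≤ d2v := by
      rw [hd2vdef]
      apply Finset.sum_le_sum
      intro i _
      rw [e2 i, ip, ← hFx i]
      nlinarith [mul_self_nonneg (deriv (F i) tj).re, mul_self_nonneg (deriv (F i) tj).im]
    have h2 : ∑ i, (2 * ip (v x i) (pd (pd (fun z => v z i) j) j x))
        = 2 * ∑ i, ip (v x i) (pd (pd (fun z => v z i) j) j x) := by
      rw [Finset.mul_sum]
    linarith

/-- Proposition 7.1: the linearization `B* - (1/2)I - σ D_μ` of the blow-up rescaled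
Navier--Stokes equations about the zero solution has no eigenvalue with real part `> -1/2`;
in particular no eigenvalue on the imaginary axis, so an Andronov--Hopf bifurcation from `0`
is impossible. -/
theorem no_andronov_hopf_from_zero (sig : ℝ) (lam : ℂ)
    (v : SchwartzMap (Fin 3 → ℝ) (Fin 3 → ℂ)) (hv : v ≠ 0)
    (heig : ∀ y : Fin 3 → ℝ, ∀ i : Fin 3,
      (∑ j, pd (pd (fun z => v z i) j) j y)
        - (1 / 2 : ℂ) * ∑ j, (y j : ℂ) * pd (fun z => v z i) j y
        - (1 / 2 : ℂ) * v y i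
        - (sig : ℂ) * ((y 0 : ℂ) * pd (fun z => v z i) 1 y
            - (y 1 : ℂ) * pd (fun z => v z i) 0 y)
        = lam * v y i) :
    lam.re ≤ -(1 / 2) ∧ lam.re < 0 := by
  classical
  -- the squared modulus function
  set g : (Fin 3 → ℝ) → ℝ := fun y => ∑ i, Complex.normSq (v y i) with hgdef
  have hgcont : Continuous g := by
    apply continuous_finset_sum
    intro i _
    exact Complex.continuous_normSq.comp ((continuous_apply i).comp v.continuous)
  -- g tends to 0 at infinity
  have hvz : Tendsto (⇑v) (cocompact (Fin 3 → ℝ)) (𝓝 0) := zero_at_infty v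
  have hgten : Tendsto g (cocompact (Fin 3 → ℝ)) (𝓝 0) := by
    have hcont : Continuous fun u : Fin 3 → ℂ => ∑ i, Complex.normSq (u i) := by
      apply continuous_finset_sum
      intro i _
      exact Complex.continuous_normSq.comp (continuous_apply i)
    have := (hcont.tendsto 0).comp hvz
    simp only [Pi.zero_apply, map_zero, Finset.sum_const_zero] at this
    exact this
  -- a point where g is positive
  obtain ⟨y₁, hy₁⟩ : ∃ y, ⇑v y ≠ 0 := by
    by_contra hcon
    push_neg at hcon
    exact hv (SchwartzMap.ext fun y => by simpa using hcon y)
  obtain ⟨i₁, hi₁⟩ := Function.ne_iff.mp hy₁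
  have hgy₁ : 0 < g y₁ := by
    have h1 : Complex.normSq (v y₁ i₁) ≤ g y₁ :=
      Finset.single_le_sum (fun i _ => Complex.normSq_nonneg _) (Finset.mem_univ i₁)
    have h2 : 0 < Complex.normSq (v y₁ i₁) := Complex.normSq_pos.mpr (by simpa using hi₁)
    linarith
  -- a global max point of g
  obtain ⟨x, hx⟩ := hgcont.exists_forall_ge' y₁
    ((hgten.eventually_lt_const hgy₁).mono fun _ h => le_of_lt h)
  have hGpos : 0 < g x := lt_of_lt_of_le hgy₁ (hx y₁)
  -- first and second order conditions at the max
  have hmax' : ∀ y : Fin 3 → ℝ, (∑ i, ((v y i).re * (v y i).re + (v y i).im * (v y i).im))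
      ≤ ∑ i, ((v x i).re * (v x i).re + (v x i).im * (v x i).im) := by
    intro y
    have := hx y
    simpa only [hgdef, Complex.normSq_apply] using this
  have hPQ := fun j => sliceMax v x hmax' j
  -- take ip (v x i) of the eigenvalue equation and sum over i
  have key : ∀ i, lam.re * ip (v x i) (v x i)
      = (∑ j, ip (v x i) (pd (pd (fun z => v z i) j) j x))
        - (1 / 2) * (∑ j, x j * ip (v x i) (pd (fun z => v z i) j x))
        - (1 / 2) * ip (v x i) (v x i)
        - sig * (x 0 * ip (v x i) (pd (fun z => v z i) 1 x)
               - x 1 * ip (v x i) (pd (fun z => v z i) 0 x)) := by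
    intro i
    have h1 := congrArg (fun w => ip (v x i) w) (heig x i)
    simp only [ip_sub, ip_sum, ip_half_mul, ip_ofReal_mul, ip_lam] at h1
    rw [← h1]
    norm_num
  have hg_ip : g x = ip (v x 0) (v x 0) + ip (v x 1) (v x 1) + ip (v x 2) (v x 2) := by
    rw [hgdef]
    simp [Fin.sum_univ_three, ip, Complex.normSq_apply]
  have k0 := key 0
  have k1 := key 1
  have k2 := key 2
  have hP0 := (hPQ 0).1
  have hP1 := (hPQ 1).1
  have hP2 := (hPQ 2).1
  have hQ0 := (hPQ 0).2
  have hQ1 := (hPQ 1).2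
  have hQ2 := (hPQ 2).2
  simp only [Fin.sum_univ_three] at k0 k1 k2 hP0 hP1 hP2 hQ0 hQ1 hQ2
  have heq : lam.re * g x
      = ((ip (v x 0) (pd (pd (fun z => v z 0) 0) 0 x)
          + ip (v x 1) (pd (pd (fun z => v z 1) 0) 0 x)
          + ip (v x 2) (pd (pd (fun z => v z 2) 0) 0 x))
        + (ip (v x 0) (pd (pd (fun z => v z 0) 1) 1 x)
          + ip (v x 1) (pd (pd (fun z => v z 1) 1) 1 x)
          + ip (v x 2) (pd (pd (fun z => v z 2) 1) 1 x))
        + (ip (v x 0) (pd (pd (fun z => v z 0) 2) 2 x)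
          + ip (v x 1) (pd (pd (fun z => v z 1) 2) 2 x)
          + ip (v x 2) (pd (pd (fun z => v z 2) 2) 2 x)))
        - (1 / 2) * g x := by
    rw [hg_ip]
    linear_combination k0 + k1 + k2 - (1 / 2 * x 0) * hP0 - (1 / 2 * x 1) * hP1
      - (1 / 2 * x 2) * hP2 - (sig * x 0) * hP1 + (sig * x 1) * hP0
  have hle : lam.re * g x ≤ -(1 / 2) * g x := by
    rw [heq]
    linarith
  have h1 : lam.re ≤ -(1 / 2) := by
    by_contra hcon
    push_neg at hcon
    nlinarith [mul_pos (by linarith : (0 : ℝ) < lam.re + 1 / 2) hGpos]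
  exact ⟨h1, by linarith⟩
end

section
/- Maximum-principle identity for Leray's rescaled stationary Navier–Stokes system: let Ω ⊆ ℝ³ be open, U : Ω → ℝ³ of class C³ and P : Ω → ℝ of class C², satisfying (1/2)U + (1/2)(y·∇)U + (U·∇)U = −∇P + ΔU and div U = 0 on Ω. Then the head-pressure function Π := (1/2)|U|² + (1/2)⟨y, U⟩ + P satisfies the pointwise identity −ΔΠ + ⟨U + y/2, ∇Π⟩ = −|curl U|² on Ω; in particular −ΔΠ + ⟨U + y/2, ∇Π⟩ ≤ 0, so Π obeys an elliptic maximum principle. -/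
open Real Set

section Aux

variable {N : ℕ}

lemma tendsto_update' (x : Fin N → ℝ) (j : Fin N) :
    Filter.Tendsto (fun s : ℝ => Function.update x j s) (nhds (x j)) (nhds x) := by
  have h := (hasDerivAt_update x j (x j)).continuousAt
  simpa [ContinuousAt, Function.update_eq_self] using h

lemma pd_congr_nhds {F : Type*} [NormedAddCommGroup F] [NormedSpace ℝ F]
    {f g : (Fin N → ℝ) → F} {x : Fin N → ℝ} (h : f =ᶠ[nhds x] g) (j : Fin N) :
    pd f j x = pd g j x :=
  Filter.EventuallyEq.deriv_eq (h.comp_tendsto (tendsto_update' x j))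

lemma pd_hasDerivAt {F : Type*} [NormedAddCommGroup F] [NormedSpace ℝ F]
    {f : (Fin N → ℝ) → F} {x : Fin N → ℝ} (h : DifferentiableAt ℝ f x) (j : Fin N) :
    HasDerivAt (fun s => f (Function.update x j s)) (fderiv ℝ f x (Pi.single j 1)) (x j) := by
  have h1 : HasFDerivAt f (fderiv ℝ f x) (Function.update x j (x j)) := by
    rw [Function.update_eq_self]; exact h.hasFDerivAt
  simpa [Function.comp_def] using h1.comp_hasDerivAt (x j) (hasDerivAt_update x j (x j))

lemma pd_eq_fderiv {F : Type*} [NormedAddCommGroup F] [NormedSpace ℝ F]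
    {f : (Fin N → ℝ) → F} {x : Fin N → ℝ} (h : DifferentiableAt ℝ f x) (j : Fin N) :
    pd f j x = fderiv ℝ f x (Pi.single j 1) :=
  (pd_hasDerivAt h j).deriv

/-- First-order derivative atom: `gd f j = ∂_j f` as a function. -/
noncomputable def gd (f : (Fin N → ℝ) → ℝ) (j : Fin N) : (Fin N → ℝ) → ℝ :=
  fun z => fderiv ℝ f z (Pi.single j 1)

variable {Ω : Set (Fin N → ℝ)} {f g : (Fin N → ℝ) → ℝ} {n : WithTop ℕ∞}

lemma diffAt_of_contDiffOn {F : Type*} [NormedAddCommGroup F] [NormedSpace ℝ F]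
    {f : (Fin N → ℝ) → F} (hΩ : IsOpen Ω) (hf : ContDiffOn ℝ n f Ω) (hn : 1 ≤ n)
    {x : Fin N → ℝ} (hx : x ∈ Ω) : DifferentiableAt ℝ f x :=
  (hf.differentiableOn (zero_lt_one.trans_le hn).ne').differentiableAt (hΩ.mem_nhds hx)

lemma gd_contDiffOn (hΩ : IsOpen Ω) (hf : ContDiffOn ℝ n f Ω) {m : WithTop ℕ∞}
    (hm : m + 1 ≤ n) (j : Fin N) : ContDiffOn ℝ m (gd f j) Ω :=
  (hf.fderiv_of_isOpen hΩ hm).clm_apply contDiffOn_const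

lemma pd_eq_gd (hΩ : IsOpen Ω) (hf : ContDiffOn ℝ n f Ω) (hn : 1 ≤ n)
    {x : Fin N → ℝ} (hx : x ∈ Ω) (j : Fin N) : pd f j x = gd f j x :=
  pd_eq_fderiv (diffAt_of_contDiffOn hΩ hf hn hx) j

lemma gd_congr_nhds {x : Fin N → ℝ} (h : f =ᶠ[nhds x] g) (j : Fin N) :
    gd f j x = gd g j x :=
  congrArg (fun L : (Fin N → ℝ) →L[ℝ] ℝ => L (Pi.single j 1)) h.fderiv_eq

lemma pd_pd_eq_gd (hΩ : IsOpen Ω) (hf : ContDiffOn ℝ n f Ω) (hn : 2 ≤ n)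
    {x : Fin N → ℝ} (hx : x ∈ Ω) (j k : Fin N) :
    pd (pd f j) k x = gd (gd f j) k x := by
  have hn1 : (1 : WithTop ℕ∞) ≤ n := le_trans (by norm_num) hn
  have hm : (1 : WithTop ℕ∞) + 1 ≤ n := le_trans (by norm_num) hn
  have h1 : pd f j =ᶠ[nhds x] gd f j :=
    Filter.eventuallyEq_of_mem (hΩ.mem_nhds hx) fun z hz => pd_eq_gd hΩ hf hn1 hz j
  rw [pd_congr_nhds h1 k]
  exact pd_eq_fderiv (diffAt_of_contDiffOn hΩ (gd_contDiffOn hΩ hf hm j) le_rfl hx) k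

lemma gd_symm (hΩ : IsOpen Ω) (hf : ContDiffOn ℝ n f Ω) (hn : 2 ≤ n)
    {x : Fin N → ℝ} (hx : x ∈ Ω) (j k : Fin N) :
    gd (gd f j) k x = gd (gd f k) j x := by
  have hn1 : (1 : WithTop ℕ∞) ≤ n := le_trans (by norm_num) hn
  have hm : (1 : WithTop ℕ∞) + 1 ≤ n := le_trans (by norm_num) hn
  have hev : ∀ᶠ z in nhds x, HasFDerivAt f (fderiv ℝ f z) z :=
    Filter.eventually_of_mem (hΩ.mem_nhds hx)
      fun z hz => (diffAt_of_contDiffOn hΩ hf hn1 hz).hasFDerivAt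
  have hd : DifferentiableAt ℝ (fderiv ℝ f) x :=
    diffAt_of_contDiffOn hΩ (hf.fderiv_of_isOpen hΩ hm) le_rfl hx
  have hsymm := second_derivative_symmetric_of_eventually hev hd.hasFDerivAt
  have key : ∀ v w : Fin N → ℝ,
      fderiv ℝ (fun z => fderiv ℝ f z v) x w = fderiv ℝ (fderiv ℝ f) x w v := by
    intro v w
    have h2 : HasFDerivAt (fun z => fderiv ℝ f z v)
        ((ContinuousLinearMap.apply ℝ ℝ v).comp (fderiv ℝ (fderiv ℝ f) x)) x :=
      (ContinuousLinearMap.apply ℝ ℝ v).hasFDerivAt.comp x hd.hasFDerivAt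
    rw [h2.fderiv]; rfl
  have l1 : gd (gd f j) k x
      = fderiv ℝ (fderiv ℝ f) x (Pi.single k 1) (Pi.single j 1) :=
    key (Pi.single j 1) (Pi.single k 1)
  have l2 : gd (gd f k) j x
      = fderiv ℝ (fderiv ℝ f) x (Pi.single j 1) (Pi.single k 1) :=
    key (Pi.single k 1) (Pi.single j 1)
  rw [l1, l2, hsymm]

end Aux

/-- Identity (2.13) (Nečas--Růžička--Šverák): for a solution `(U,P)` of Leray's rescaled
stationary Navier--Stokes system, the head pressure `Π = (1/2)|U|² + (1/2)⟨y,U⟩ + P`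
satisfies `-ΔΠ + ⟨U + y/2, ∇Π⟩ = -|curl U|² ≤ 0`, hence obeys an elliptic maximum
principle. -/
theorem leray_maximum_principle
    (Ω : Set (Fin 3 → ℝ)) (hΩ : IsOpen Ω)
    (U : (Fin 3 → ℝ) → Fin 3 → ℝ) (P : (Fin 3 → ℝ) → ℝ)
    (hU : ContDiffOn ℝ 3 U Ω) (hP : ContDiffOn ℝ 2 P Ω)
    (heq : ∀ y ∈ Ω, ∀ i : Fin 3,
      (1/2) * U y i + (1/2) * ∑ j, y j * pd (fun z => U z i) j y
          + ∑ j, U y j * pd (fun z => U z i) j y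
        = - pd P i y + ∑ j, pd (pd (fun z => U z i) j) j y)
    (hdiv : ∀ y ∈ Ω, ∑ j, pd (fun z => U z j) j y = 0)
    (Phead : (Fin 3 → ℝ) → ℝ)
    (hPhead : ∀ y, Phead y = (1/2) * ∑ i, (U y i)^2 + (1/2) * ∑ i, y i * U y i + P y) :
    ∀ y ∈ Ω,
      ((- ∑ j, pd (pd Phead j) j y) + ∑ j, (U y j + y j / 2) * pd Phead j y
        = - ((pd (fun z => U z 2) 1 y - pd (fun z => U z 1) 2 y)^2
            + (pd (fun z => U z 0) 2 y - pd (fun z => U z 2) 0 y)^2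
            + (pd (fun z => U z 1) 0 y - pd (fun z => U z 0) 1 y)^2))
      ∧ (- ∑ j, pd (pd Phead j) j y) + ∑ j, (U y j + y j / 2) * pd Phead j y ≤ 0 := by
  intro y hy
  have h13 : (1 : WithTop ℕ∞) ≤ 3 := by norm_num
  have h23 : (2 : WithTop ℕ∞) ≤ 3 := by norm_num
  have h12 : (1 : WithTop ℕ∞) ≤ 2 := by norm_num
  have hm23 : (2 : WithTop ℕ∞) + 1 ≤ 3 := by norm_num
  have hm12 : (1 : WithTop ℕ∞) + 1 ≤ 2 := by norm_num
  have hUi : ∀ i : Fin 3, ContDiffOn ℝ 3 (fun z => U z i) Ω := fun i => contDiffOn_pi.mp hU i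
  have dU : ∀ x ∈ Ω, ∀ i, DifferentiableAt ℝ (fun z => U z i) x :=
    fun x hx i => diffAt_of_contDiffOn hΩ (hUi i) h13 hx
  have dP : ∀ x ∈ Ω, DifferentiableAt ℝ P x := fun x hx => diffAt_of_contDiffOn hΩ hP h12 hx
  have hgU : ∀ i j, ContDiffOn ℝ 2 (gd (fun z => U z i) j) Ω :=
    fun i j => gd_contDiffOn hΩ (hUi i) hm23 j
  have hggU : ∀ i j k, ContDiffOn ℝ 1 (gd (gd (fun z => U z i) j) k) Ω :=
    fun i j k => gd_contDiffOn hΩ (hgU i j) hm12 k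
  have dgU : ∀ x ∈ Ω, ∀ i j, DifferentiableAt ℝ (gd (fun z => U z i) j) x :=
    fun x hx i j => diffAt_of_contDiffOn hΩ (hgU i j) h12 hx
  have dggU : ∀ x ∈ Ω, ∀ i j k, DifferentiableAt ℝ (gd (gd (fun z => U z i) j) k) x :=
    fun x hx i j k => diffAt_of_contDiffOn hΩ (hggU i j k) le_rfl hx
  have hgP : ∀ j, ContDiffOn ℝ 1 (gd P j) Ω := fun j => gd_contDiffOn hΩ hP hm12 j
  have dgP : ∀ x ∈ Ω, ∀ j, DifferentiableAt ℝ (gd P j) x :=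
    fun x hx j => diffAt_of_contDiffOn hΩ (hgP j) le_rfl hx
  -- coordinate derivative blocks
  have hcoord : ∀ (x : Fin 3 → ℝ) (k i : Fin 3),
      HasDerivAt (fun s => Function.update x k s i) (if i = k then (1:ℝ) else 0) (x k) := by
    intro x k i
    rcases eq_or_ne i k with rfl | h
    · simp only [Function.update_self, if_pos rfl]
      exact hasDerivAt_id' (x i)
    · simp only [Function.update_of_ne h, if_neg h]
      exact hasDerivAt_const (x k) (x i)
  -- the equation in gd form
  have KEY3 : ∀ x ∈ Ω, ∀ k : Fin 3, gd P k x
      = -((1/2) * U x k + (1/2) * ∑ j, x j * gd (fun z => U z k) j x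
          + ∑ j, U x j * gd (fun z => U z k) j x)
        + ∑ j, gd (gd (fun z => U z k) j) j x := by
    intro x hx k
    have h := heq x hx k
    rw [pd_eq_gd hΩ hP h12 hx k] at h
    have e1 : ∀ j, pd (fun z => U z k) j x = gd (fun z => U z k) j x :=
      fun j => pd_eq_gd hΩ (hUi k) h13 hx j
    have e2 : ∀ j, pd (pd (fun z => U z k) j) j x = gd (gd (fun z => U z k) j) j x :=
      fun j => pd_pd_eq_gd hΩ (hUi k) h23 hx j j
    simp only [e1, e2] at h
    linarith [h]
  -- divergence facts
  have hdivg : ∀ x ∈ Ω, ∑ k : Fin 3, gd (fun z => U z k) k x = 0 := by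
    intro x hx
    rw [← hdiv x hx]
    exact Finset.sum_congr rfl fun k _ => (pd_eq_gd hΩ (hUi k) h13 hx k).symm
  have hB : ∀ x ∈ Ω, ∀ j : Fin 3, ∑ k : Fin 3, gd (gd (fun z => U z k) k) j x = 0 := by
    intro x hx j
    have hz : (fun z => ∑ k : Fin 3, gd (fun w => U w k) k z) =ᶠ[nhds x] (fun _ => (0:ℝ)) :=
      Filter.eventuallyEq_of_mem (hΩ.mem_nhds hx) fun z hz => hdivg z hz
    have hsum : fderiv ℝ (fun z => ∑ k : Fin 3, gd (fun w => U w k) k z) x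
        = ∑ k : Fin 3, fderiv ℝ (gd (fun w => U w k) k) x :=
      fderiv_fun_sum fun k _ => dgU x hx k k
    calc ∑ k : Fin 3, gd (gd (fun z => U z k) k) j x
        = (∑ k : Fin 3, fderiv ℝ (gd (fun w => U w k) k) x) (Pi.single j 1) :=
          (ContinuousLinearMap.sum_apply _ _ _).symm
      _ = fderiv ℝ (fun z => ∑ k : Fin 3, gd (fun w => U w k) k z) x (Pi.single j 1) := by
          rw [hsum]
      _ = fderiv ℝ (fun _ : Fin 3 → ℝ => (0:ℝ)) x (Pi.single j 1) := by rw [hz.fderiv_eq]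
      _ = 0 := by rw [fderiv_const_apply]; rfl
  have hC : ∀ j : Fin 3, ∑ k : Fin 3, gd (gd (gd (fun z => U z k) k) j) j y = 0 := by
    intro j
    have hz : (fun z => ∑ k : Fin 3, gd (gd (fun w => U w k) k) j z) =ᶠ[nhds y] (fun _ => (0:ℝ)) :=
      Filter.eventuallyEq_of_mem (hΩ.mem_nhds hy) fun z hz => hB z hz j
    have hsum : fderiv ℝ (fun z => ∑ k : Fin 3, gd (gd (fun w => U w k) k) j z) y
        = ∑ k : Fin 3, fderiv ℝ (gd (gd (fun w => U w k) k) j) y :=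
      fderiv_fun_sum fun k _ => dggU y hy k k j
    calc ∑ k : Fin 3, gd (gd (gd (fun z => U z k) k) j) j y
        = (∑ k : Fin 3, fderiv ℝ (gd (gd (fun w => U w k) k) j) y) (Pi.single j 1) :=
          (ContinuousLinearMap.sum_apply _ _ _).symm
      _ = fderiv ℝ (fun z => ∑ k : Fin 3, gd (gd (fun w => U w k) k) j z) y (Pi.single j 1) := by
          rw [hsum]
      _ = fderiv ℝ (fun _ : Fin 3 → ℝ => (0:ℝ)) y (Pi.single j 1) := by rw [hz.fderiv_eq]
      _ = 0 := by rw [fderiv_const_apply]; rfl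
  -- symmetry of second and third derivatives
  have hbs : ∀ i j k : Fin 3,
      gd (gd (fun z => U z i) j) k y = gd (gd (fun z => U z i) k) j y :=
    fun i j k => gd_symm hΩ (hUi i) h23 hy j k
  have hcs : ∀ k j : Fin 3,
      gd (gd (gd (fun z => U z k) j) j) k y = gd (gd (gd (fun z => U z k) k) j) j y := by
    intro k j
    have s1 : gd (gd (gd (fun z => U z k) j) j) k y
        = gd (gd (gd (fun z => U z k) j) k) j y :=
      gd_symm hΩ (hgU k j) le_rfl hy j k
    have s2 : gd (gd (fun z => U z k) j) k =ᶠ[nhds y] gd (gd (fun z => U z k) k) j :=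
      Filter.eventuallyEq_of_mem (hΩ.mem_nhds hy)
        fun z hz => gd_symm hΩ (hUi k) h23 hz j k
    rw [s1, gd_congr_nhds s2 j]
  -- first derivative of Phead
  have hPh : Phead = fun z =>
      (1/2) * ∑ i, (U z i)^2 + (1/2) * ∑ i, z i * U z i + P z := funext hPhead
  have KEY1 : ∀ x ∈ Ω, ∀ k : Fin 3, pd Phead k x
      = (1/2) * (∑ i : Fin 3, 2 * U x i * gd (fun z => U z i) k x)
        + (1/2) * (U x k + ∑ i : Fin 3, x i * gd (fun z => U z i) k x) + gd P k x := by
    intro x hx k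
    have hA : ∀ i : Fin 3, HasDerivAt (fun s => U (Function.update x k s) i)
        (gd (fun z => U z i) k x) (x k) := fun i => pd_hasDerivAt (dU x hx i) k
    have hPd : HasDerivAt (fun s => P (Function.update x k s)) (gd P k x) (x k) :=
      pd_hasDerivAt (dP x hx) k
    have h1 : HasDerivAt (fun s => ∑ i : Fin 3, (U (Function.update x k s) i)^2)
        (∑ i : Fin 3, 2 * U x i * gd (fun z => U z i) k x) (x k) := by
      have h := HasDerivAt.fun_sum (u := Finset.univ) fun i _ => (hA i).pow 2
      refine h.congr_deriv ?_
      symm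
      refine Finset.sum_congr rfl fun i _ => ?_
      simp [Function.update_eq_self]
    have h2 : HasDerivAt
        (fun s => ∑ i : Fin 3, Function.update x k s i * U (Function.update x k s) i)
        (U x k + ∑ i : Fin 3, x i * gd (fun z => U z i) k x) (x k) := by
      have h := HasDerivAt.fun_sum (u := Finset.univ) fun i _ => (hcoord x k i).mul (hA i)
      refine h.congr_deriv ?_
      symm
      simp [Function.update_eq_self, ite_mul, Finset.sum_add_distrib, Finset.sum_ite_eq']
    have H := ((h1.const_mul ((1:ℝ)/2)).add (h2.const_mul ((1:ℝ)/2))).add hPd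
    rw [hPh]
    exact H.deriv
  -- second derivative of Phead
  have KEY2 : ∀ k : Fin 3, pd (pd Phead k) k y
      = (1/2) * (∑ i : Fin 3, (2 * gd (fun z => U z i) k y * gd (fun z => U z i) k y
            + 2 * U y i * gd (gd (fun z => U z i) k) k y))
        + (1/2) * (gd (fun z => U z k) k y
            + (gd (fun z => U z k) k y + ∑ i : Fin 3, y i * gd (gd (fun z => U z i) k) k y))
        + gd (gd P k) k y := by
    intro k
    have hev : pd Phead k =ᶠ[nhds y] (fun x =>
        (1/2) * (∑ i : Fin 3, 2 * U x i * gd (fun z => U z i) k x)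
        + (1/2) * (U x k + ∑ i : Fin 3, x i * gd (fun z => U z i) k x) + gd P k x) :=
      Filter.eventuallyEq_of_mem (hΩ.mem_nhds hy) fun z hz => KEY1 z hz k
    rw [pd_congr_nhds hev k]
    have hA : ∀ i : Fin 3, HasDerivAt (fun s => U (Function.update y k s) i)
        (gd (fun z => U z i) k y) (y k) := fun i => pd_hasDerivAt (dU y hy i) k
    have hgd : ∀ i : Fin 3, HasDerivAt (fun s => gd (fun z => U z i) k (Function.update y k s))
        (gd (gd (fun z => U z i) k) k y) (y k) := fun i => pd_hasDerivAt (dgU y hy i k) k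
    have hgdP : HasDerivAt (fun s => gd P k (Function.update y k s))
        (gd (gd P k) k y) (y k) := pd_hasDerivAt (dgP y hy k) k
    have t1 : HasDerivAt (fun s => ∑ i : Fin 3,
          2 * U (Function.update y k s) i * gd (fun z => U z i) k (Function.update y k s))
        (∑ i : Fin 3, (2 * gd (fun z => U z i) k y * gd (fun z => U z i) k y
            + 2 * U y i * gd (gd (fun z => U z i) k) k y)) (y k) := by
      have h := HasDerivAt.fun_sum (u := Finset.univ)
        fun i _ => ((hA i).const_mul 2).mul (hgd i)
      refine h.congr_deriv ?_
      symm
      refine Finset.sum_congr rfl fun i _ => ?_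
      simp [Function.update_eq_self]
    have t3 : HasDerivAt (fun s => ∑ i : Fin 3,
          Function.update y k s i * gd (fun z => U z i) k (Function.update y k s))
        (gd (fun z => U z k) k y + ∑ i : Fin 3, y i * gd (gd (fun z => U z i) k) k y) (y k) := by
      have h := HasDerivAt.fun_sum (u := Finset.univ) fun i _ => (hcoord y k i).mul (hgd i)
      refine h.congr_deriv ?_
      symm
      simp [Function.update_eq_self, ite_mul, Finset.sum_add_distrib, Finset.sum_ite_eq']
    have H := ((t1.const_mul ((1:ℝ)/2)).add (((hA k).add t3).const_mul ((1:ℝ)/2))).add hgdP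
    exact H.deriv
  -- second derivative of the pressure
  have KEY4 : ∀ k : Fin 3, gd (gd P k) k y
      = -((1/2) * gd (fun z => U z k) k y
          + (1/2) * (gd (fun z => U z k) k y
              + ∑ j : Fin 3, y j * gd (gd (fun z => U z k) j) k y)
          + ∑ j : Fin 3, (gd (fun z => U z j) k y * gd (fun z => U z k) j y
              + U y j * gd (gd (fun z => U z k) j) k y))
        + ∑ j : Fin 3, gd (gd (gd (fun z => U z k) j) j) k y := by
    intro k
    have h0 : gd (gd P k) k y = pd (gd P k) k y := (pd_eq_fderiv (dgP y hy k) k).symm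
    rw [h0]
    have hev : gd P k =ᶠ[nhds y] (fun x =>
        -((1/2) * U x k + (1/2) * ∑ j, x j * gd (fun z => U z k) j x
          + ∑ j, U x j * gd (fun z => U z k) j x)
        + ∑ j, gd (gd (fun z => U z k) j) j x) :=
      Filter.eventuallyEq_of_mem (hΩ.mem_nhds hy) fun z hz => KEY3 z hz k
    rw [pd_congr_nhds hev k]
    have hA : ∀ i : Fin 3, HasDerivAt (fun s => U (Function.update y k s) i)
        (gd (fun z => U z i) k y) (y k) := fun i => pd_hasDerivAt (dU y hy i) k
    have hgdk : ∀ j : Fin 3, HasDerivAt (fun s => gd (fun z => U z k) j (Function.update y k s))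
        (gd (gd (fun z => U z k) j) k y) (y k) := fun j => pd_hasDerivAt (dgU y hy k j) k
    have hg2 : ∀ j : Fin 3,
        HasDerivAt (fun s => gd (gd (fun z => U z k) j) j (Function.update y k s))
          (gd (gd (gd (fun z => U z k) j) j) k y) (y k) :=
      fun j => pd_hasDerivAt (dggU y hy k j j) k
    have s1 : HasDerivAt (fun s => ∑ j : Fin 3,
          Function.update y k s j * gd (fun z => U z k) j (Function.update y k s))
        (gd (fun z => U z k) k y + ∑ j : Fin 3, y j * gd (gd (fun z => U z k) j) k y) (y k) := by
      have h := HasDerivAt.fun_sum (u := Finset.univ) fun j _ => (hcoord y k j).mul (hgdk j)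
      refine h.congr_deriv ?_
      symm
      simp [Function.update_eq_self, ite_mul, Finset.sum_add_distrib, Finset.sum_ite_eq']
    have s2 : HasDerivAt (fun s => ∑ j : Fin 3,
          U (Function.update y k s) j * gd (fun z => U z k) j (Function.update y k s))
        (∑ j : Fin 3, (gd (fun z => U z j) k y * gd (fun z => U z k) j y
            + U y j * gd (gd (fun z => U z k) j) k y)) (y k) := by
      have h := HasDerivAt.fun_sum (u := Finset.univ) fun j _ => (hA j).mul (hgdk j)
      refine h.congr_deriv ?_
      symm
      refine Finset.sum_congr rfl fun j _ => ?_
      simp [Function.update_eq_self]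
    have s3 : HasDerivAt (fun s => ∑ j : Fin 3,
          gd (gd (fun z => U z k) j) j (Function.update y k s))
        (∑ j : Fin 3, gd (gd (gd (fun z => U z k) j) j) k y) (y k) :=
      HasDerivAt.fun_sum (u := Finset.univ) fun j _ => hg2 j
    have H := (((((hA k).const_mul ((1:ℝ)/2)).add (s1.const_mul ((1:ℝ)/2))).add s2).neg).add s3
    exact H.deriv
  -- final assembly
  have main : (- ∑ j, pd (pd Phead j) j y) + ∑ j, (U y j + y j / 2) * pd Phead j y
      = - ((pd (fun z => U z 2) 1 y - pd (fun z => U z 1) 2 y)^2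
          + (pd (fun z => U z 0) 2 y - pd (fun z => U z 2) 0 y)^2
          + (pd (fun z => U z 1) 0 y - pd (fun z => U z 0) 1 y)^2) := by
    have k1 : ∀ k, pd Phead k y
        = (1/2) * (∑ i : Fin 3, 2 * U y i * gd (fun z => U z i) k y)
          + (1/2) * (U y k + ∑ i : Fin 3, y i * gd (fun z => U z i) k y) + gd P k y :=
      fun k => KEY1 y hy k
    have k3 : ∀ k : Fin 3, gd P k y
        = -((1/2) * U y k + (1/2) * ∑ j, y j * gd (fun z => U z k) j y
            + ∑ j, U y j * gd (fun z => U z k) j y)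
          + ∑ j, gd (gd (fun z => U z k) j) j y := fun k => KEY3 y hy k
    rw [Fin.sum_univ_three, Fin.sum_univ_three]
    rw [KEY2 0, KEY2 1, KEY2 2, KEY4 0, KEY4 1, KEY4 2, k1 0, k1 1, k1 2, k3 0, k3 1, k3 2]
    rw [pd_eq_gd hΩ (hUi 2) h13 hy 1, pd_eq_gd hΩ (hUi 1) h13 hy 2,
        pd_eq_gd hΩ (hUi 0) h13 hy 2, pd_eq_gd hΩ (hUi 2) h13 hy 0,
        pd_eq_gd hΩ (hUi 1) h13 hy 0, pd_eq_gd hΩ (hUi 0) h13 hy 1]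
    simp only [Fin.sum_univ_three]
    rw [hbs 0 1 0, hbs 0 2 0, hbs 1 0 1, hbs 1 2 1, hbs 2 0 2, hbs 2 1 2]
    rw [hcs 0 1, hcs 0 2, hcs 1 0, hcs 1 2, hcs 2 0, hcs 2 1]
    have hb0 := hB y hy 0
    have hb1 := hB y hy 1
    have hb2 := hB y hy 2
    have hc0 := hC 0
    have hc1 := hC 1
    have hc2 := hC 2
    simp only [Fin.sum_univ_three] at hb0 hb1 hb2 hc0 hc1 hc2
    linear_combination (U y 0 + y 0 / 2) * hb0 + (U y 1 + y 1 / 2) * hb1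
      + (U y 2 + y 2 / 2) * hb2 - hc0 - hc1 - hc2
  refine ⟨main, ?_⟩
  rw [main]
  have hpos : (0:ℝ) ≤ (pd (fun z => U z 2) 1 y - pd (fun z => U z 1) 2 y)^2
      + (pd (fun z => U z 0) 2 y - pd (fun z => U z 2) 0 y)^2
      + (pd (fun z => U z 1) 0 y - pd (fun z => U z 0) 1 y)^2 := by positivity
  linarith
end

section
/- Slezkin's integrability reduction: let I ⊆ ℝ be an open interval, ν ∈ ℝ, and f : I → ℝ of class C⁴. Then f satisfies Slezkin's fourth-order equation f f''' + 3 f' f'' = ν[(1 − τ²) f'''' − 4τ f'''] on I if and only if there exist constants C₀, C₁, C₂ ∈ ℝ such that (1/2) f(τ)² − ν[(1 − τ²) f'(τ) + 2τ f(τ)] = C₀ + C₁τ + C₂τ² for all τ ∈ I. The two key identities are (1/2)(f²)''' = f f''' + 3 f' f'' and ((1 − τ²) f' + 2τ f)''' = (1 − τ²) f'''' − 4τ f'''. -/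
open Real Set

private lemma deriv_congr_on {s : Set ℝ} (hs : IsOpen s) {u v : ℝ → ℝ}
    (h : Set.EqOn u v s) {τ : ℝ} (hτ : τ ∈ s) : deriv u τ = deriv v τ :=
  Filter.EventuallyEq.deriv_eq (Filter.eventuallyEq_of_mem (hs.mem_nhds hτ) h)

private lemma const_on_Ioo {a b : ℝ} {u : ℝ → ℝ}
    (hu : ∀ x ∈ Set.Ioo a b, HasDerivAt u 0 x) {x y : ℝ}
    (hx : x ∈ Set.Ioo a b) (hy : y ∈ Set.Ioo a b) : u x = u y := by
  refine (convex_Ioo a b).is_const_of_fderivWithin_eq_zero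
    (fun z hz => (hu z hz).differentiableAt.differentiableWithinAt) (fun z hz => ?_) hx hy
  rw [fderivWithin_of_isOpen isOpen_Ioo hz, (hu z hz).hasFDerivAt.fderiv]
  ext w
  simp

private lemma quad_on_Ioo {a b : ℝ} {g g1 g2 : ℝ → ℝ}
    (h1 : ∀ τ ∈ Set.Ioo a b, HasDerivAt g (g1 τ) τ)
    (h2 : ∀ τ ∈ Set.Ioo a b, HasDerivAt g1 (g2 τ) τ)
    (h3 : ∀ τ ∈ Set.Ioo a b, HasDerivAt g2 0 τ) :
    ∃ C₀ C₁ C₂ : ℝ, ∀ τ ∈ Set.Ioo a b, g τ = C₀ + C₁ * τ + C₂ * τ ^ 2 := by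
  rcases Set.eq_empty_or_nonempty (Set.Ioo a b) with he | ⟨x₀, hx₀⟩
  · exact ⟨0, 0, 0, fun τ hτ => absurd hτ (by simp [he])⟩
  · set K2 := g2 x₀ with hK2
    have hg2c : ∀ τ ∈ Set.Ioo a b, g2 τ = K2 := fun τ hτ => const_on_Ioo h3 hτ hx₀
    -- g1 is affine
    have hu1 : ∀ τ ∈ Set.Ioo a b, HasDerivAt (fun t => g1 t - K2 * t) 0 τ := by
      intro τ hτ
      have := (h2 τ hτ).sub ((hasDerivAt_id τ).const_mul K2)
      simp [hg2c τ hτ] at this; exact this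
    set K1 := g1 x₀ - K2 * x₀ with hK1
    have hg1 : ∀ τ ∈ Set.Ioo a b, g1 τ = K1 + K2 * τ := by
      intro τ hτ
      have := const_on_Ioo hu1 hτ hx₀
      linarith [this]
    have hu0 : ∀ τ ∈ Set.Ioo a b,
        HasDerivAt (fun t => g t - K1 * t - (K2 / 2) * t ^ 2) 0 τ := by
      intro τ hτ
      have := ((h1 τ hτ).sub ((hasDerivAt_id τ).const_mul K1)).sub
        ((hasDerivAt_pow 2 τ).const_mul (K2 / 2))
      refine this.congr_deriv ?_
      rw [hg1 τ hτ]; ring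
    refine ⟨g x₀ - K1 * x₀ - (K2 / 2) * x₀ ^ 2, K1, K2 / 2, fun τ hτ => ?_⟩
    have := const_on_Ioo hu0 hτ hx₀
    linarith [this]

/-- Slezkin's integrability reduction (equations (A.4)--(A.6)): a `C⁴` function `f` on an
open interval satisfies `f f''' + 3 f' f'' = ν[(1-τ²) f'''' - 4τ f''']` iff
`(1/2)f² - ν[(1-τ²)f' + 2τf]` is a quadratic polynomial `C₀ + C₁τ + C₂τ²`; this rests on
the two key identities `(1/2)(f²)''' = f f''' + 3 f' f''` and
`((1-τ²)f' + 2τf)''' = (1-τ²)f'''' - 4τ f'''`. -/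
theorem slezkin_reduction (a b ν : ℝ) (f : ℝ → ℝ)
    (hf : ContDiffOn ℝ 4 f (Set.Ioo a b)) :
    ((∀ τ ∈ Set.Ioo a b,
        f τ * deriv (deriv (deriv f)) τ + 3 * deriv f τ * deriv (deriv f) τ
          = ν * ((1 - τ^2) * deriv (deriv (deriv (deriv f))) τ
              - 4 * τ * deriv (deriv (deriv f)) τ))
      ↔ ∃ C₀ C₁ C₂ : ℝ, ∀ τ ∈ Set.Ioo a b,
          (1/2) * (f τ)^2 - ν * ((1 - τ^2) * deriv f τ + 2 * τ * f τ)
            = C₀ + C₁ * τ + C₂ * τ^2)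
    ∧ (∀ τ ∈ Set.Ioo a b,
        deriv (deriv (deriv (fun t => (1/2) * (f t)^2))) τ
          = f τ * deriv (deriv (deriv f)) τ + 3 * deriv f τ * deriv (deriv f) τ)
    ∧ (∀ τ ∈ Set.Ioo a b,
        deriv (deriv (deriv (fun t => (1 - t^2) * deriv f t + 2 * t * f t))) τ
          = (1 - τ^2) * deriv (deriv (deriv (deriv f))) τ
            - 4 * τ * deriv (deriv (deriv f)) τ) := by
  set s := Set.Ioo a b with hsdef
  have hso : IsOpen s := isOpen_Ioo
  set f1 := deriv f with hf1
  set f2 := deriv f1 with hf2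
  set f3 := deriv f2 with hf3
  set f4 := deriv f3 with hf4
  have hc1 : ContDiffOn ℝ 3 f1 s := hf.deriv_of_isOpen hso (by norm_num)
  have hc2 : ContDiffOn ℝ 2 f2 s := hc1.deriv_of_isOpen hso (by norm_num)
  have hc3 : ContDiffOn ℝ 1 f3 s := hc2.deriv_of_isOpen hso (by norm_num)
  have hD0 : ∀ τ ∈ s, HasDerivAt f (f1 τ) τ := fun τ hτ =>
    ((hf.differentiableOn (by norm_num)).differentiableAt (hso.mem_nhds hτ)).hasDerivAt
  have hD1 : ∀ τ ∈ s, HasDerivAt f1 (f2 τ) τ := fun τ hτ =>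
    ((hc1.differentiableOn (by norm_num)).differentiableAt (hso.mem_nhds hτ)).hasDerivAt
  have hD2 : ∀ τ ∈ s, HasDerivAt f2 (f3 τ) τ := fun τ hτ =>
    ((hc2.differentiableOn (by norm_num)).differentiableAt (hso.mem_nhds hτ)).hasDerivAt
  have hD3 : ∀ τ ∈ s, HasDerivAt f3 (f4 τ) τ := fun τ hτ =>
    ((hc3.differentiableOn (by norm_num)).differentiableAt (hso.mem_nhds hτ)).hasDerivAt
  -- the P chain
  set P : ℝ → ℝ := fun t => (1/2) * (f t)^2 with hP
  set P1 : ℝ → ℝ := fun t => f t * f1 t with hP1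
  set P2 : ℝ → ℝ := fun t => f1 t * f1 t + f t * f2 t with hP2
  have hDP : ∀ τ ∈ s, HasDerivAt P (P1 τ) τ := by
    intro τ hτ
    have := ((hD0 τ hτ).pow 2).const_mul (1/2 : ℝ)
    refine this.congr_deriv ?_
    simp [hP1] <;> ring
  have hDP1 : ∀ τ ∈ s, HasDerivAt P1 (P2 τ) τ := by
    intro τ hτ
    exact (hD0 τ hτ).mul (hD1 τ hτ)
  have hDP2 : ∀ τ ∈ s, HasDerivAt P2 (f τ * f3 τ + 3 * f1 τ * f2 τ) τ := by
    intro τ hτ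
    have := ((hD1 τ hτ).mul (hD1 τ hτ)).add ((hD0 τ hτ).mul (hD2 τ hτ))
    refine this.congr_deriv ?_
    ring
  -- the Q chain
  set Q : ℝ → ℝ := fun t => (1 - t^2) * f1 t + 2 * t * f t with hQ
  set Q1 : ℝ → ℝ := fun t => (1 - t^2) * f2 t + 2 * f t with hQ1
  set Q2 : ℝ → ℝ := fun t => -(2*t) * f2 t + (1 - t^2) * f3 t + 2 * f1 t with hQ2
  have hpar : ∀ τ : ℝ, HasDerivAt (fun t : ℝ => 1 - t^2) (-(2*τ)) τ := by
    intro τ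
    have := ((hasDerivAt_pow 2 τ).const_sub 1)
    simpa using this
  have hDQ : ∀ τ ∈ s, HasDerivAt Q (Q1 τ) τ := by
    intro τ hτ
    have := ((hpar τ).mul (hD1 τ hτ)).add
      ((((hasDerivAt_id τ).const_mul 2)).mul (hD0 τ hτ))
    refine this.congr_deriv ?_
    simp [hQ1] <;> ring
  have hDQ1 : ∀ τ ∈ s, HasDerivAt Q1 (Q2 τ) τ := by
    intro τ hτ
    have := ((hpar τ).mul (hD2 τ hτ)).add ((hD0 τ hτ).const_mul 2)
    exact this
  have hDQ2 : ∀ τ ∈ s, HasDerivAt Q2 ((1 - τ^2) * f4 τ - 4 * τ * f3 τ) τ := by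
    intro τ hτ
    have := ((((hasDerivAt_id τ).const_mul 2).neg.mul (hD2 τ hτ)).add
      ((hpar τ).mul (hD3 τ hτ))).add ((hD1 τ hτ).const_mul 2)
    refine this.congr_deriv ?_
    simp only [Pi.neg_apply, id_eq]; ring
  -- deriv-of-deriv transfers
  have eP1 : Set.EqOn (deriv P) P1 s := fun τ hτ => (hDP τ hτ).deriv
  have eP2 : Set.EqOn (deriv (deriv P)) P2 s := fun τ hτ => by
    rw [deriv_congr_on hso eP1 hτ, (hDP1 τ hτ).deriv]
  have eP3 : ∀ τ ∈ s, deriv (deriv (deriv P)) τ = f τ * f3 τ + 3 * f1 τ * f2 τ := by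
    intro τ hτ
    rw [deriv_congr_on hso eP2 hτ, (hDP2 τ hτ).deriv]
  have eQ1 : Set.EqOn (deriv Q) Q1 s := fun τ hτ => (hDQ τ hτ).deriv
  have eQ2 : Set.EqOn (deriv (deriv Q)) Q2 s := fun τ hτ => by
    rw [deriv_congr_on hso eQ1 hτ, (hDQ1 τ hτ).deriv]
  have eQ3 : ∀ τ ∈ s, deriv (deriv (deriv Q)) τ = (1 - τ^2) * f4 τ - 4 * τ * f3 τ := by
    intro τ hτ
    rw [deriv_congr_on hso eQ2 hτ, (hDQ2 τ hτ).deriv]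
  refine ⟨?_, eP3, eQ3⟩
  -- the H chain
  set H : ℝ → ℝ := fun t => P t - ν * Q t with hH
  set H1 : ℝ → ℝ := fun t => P1 t - ν * Q1 t with hH1
  set H2 : ℝ → ℝ := fun t => P2 t - ν * Q2 t with hH2
  have hDH : ∀ τ ∈ s, HasDerivAt H (H1 τ) τ := fun τ hτ =>
    (hDP τ hτ).sub ((hDQ τ hτ).const_mul ν)
  have hDH1 : ∀ τ ∈ s, HasDerivAt H1 (H2 τ) τ := fun τ hτ =>
    (hDP1 τ hτ).sub ((hDQ1 τ hτ).const_mul ν)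
  have hDH2 : ∀ τ ∈ s, HasDerivAt H2
      ((f τ * f3 τ + 3 * f1 τ * f2 τ) - ν * ((1 - τ^2) * f4 τ - 4 * τ * f3 τ)) τ :=
    fun τ hτ => (hDP2 τ hτ).sub ((hDQ2 τ hτ).const_mul ν)
  constructor
  · intro hode
    have h3 : ∀ τ ∈ s, HasDerivAt H2 0 τ := by
      intro τ hτ
      have := hDH2 τ hτ
      rw [show (f τ * f3 τ + 3 * f1 τ * f2 τ) - ν * ((1 - τ^2) * f4 τ - 4 * τ * f3 τ) = 0 by
        have := hode τ hτ; linarith] at this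
      exact this
    obtain ⟨C₀, C₁, C₂, hq⟩ := quad_on_Ioo hDH hDH1 h3
    exact ⟨C₀, C₁, C₂, fun τ hτ => hq τ hτ⟩
  · rintro ⟨C₀, C₁, C₂, hq⟩ τ hτ
    -- H equals the quadratic on s
    have eH : Set.EqOn H (fun t => C₀ + C₁ * t + C₂ * t ^ 2) s := fun t ht => hq t ht
    have e1 : Set.EqOn (deriv H) (fun t => C₁ + C₂ * (2 * t)) s := by
      intro t ht
      rw [deriv_congr_on hso eH ht]
      have : HasDerivAt (fun t : ℝ => C₀ + C₁ * t + C₂ * t ^ 2) (C₁ + C₂ * (2 * t)) t := by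
        have := (((hasDerivAt_id t).const_mul C₁).const_add C₀).add
          ((hasDerivAt_pow 2 t).const_mul C₂)
        refine this.congr_deriv ?_; ring
      exact this.deriv
    have e1' : Set.EqOn H1 (fun t => C₁ + C₂ * (2 * t)) s := fun t ht => by
      rw [← (hDH t ht).deriv]; exact e1 ht
    have e2 : ∀ t ∈ s, H2 t = C₂ * 2 := by
      intro t ht
      rw [← (hDH1 t ht).deriv, deriv_congr_on hso e1' ht]
      have : HasDerivAt (fun t : ℝ => C₁ + C₂ * (2 * t)) (C₂ * 2) t := by
        have := (((hasDerivAt_id t).const_mul 2).const_mul C₂).const_add C₁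
        refine this.congr_deriv ?_; ring
      exact this.deriv
    have e3 : deriv H2 τ = 0 := by
      rw [deriv_congr_on hso (fun t ht => e2 t ht) hτ]
      simp
    have := (hDH2 τ hτ).deriv
    rw [e3] at this
    linarith [this]
end
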